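/- Universal property of Σ: if S and S' are Γ-semigroups (over the same Γ) with universal semigroups Σ and Σ' (both built with the same fixed γ₀ ∈ Γ), then for every Γ-semigroup homomorphism φ: S → S' there is a unique semigroup homomorphism φ̂: Σ → Σ' fixing every element of Γ and satisfying φ̂ ∘ μ = μ' ∘ φ, where μ: S → Σ and μ': S' → Σ' are the canonical maps. -/

import Mathlib

open FreeSemigroup

section GammaSemigroup

variable {S Γ : Type}

/-- One-step rewriting on words over S ⊕ Γ. -/
inductive GStep (m : S → Γ → S → S) (γ₀ : Γ) : List (S ⊕ Γ) → List (S ⊕ Γ) → Prop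
  | gg (u v : List (S ⊕ Γ)) (γ₁ γ₂ : Γ) :
      GStep m γ₀ (u ++ Sum.inr γ₁ :: Sum.inr γ₂ :: v) (u ++ Sum.inr γ₁ :: v)
  | xgy (u v : List (S ⊕ Γ)) (x : S) (γ : Γ) (y : S) :
      GStep m γ₀ (u ++ Sum.inl x :: Sum.inr γ :: Sum.inl y :: v) (u ++ Sum.inl (m x γ y) :: v)
  | xy (u v : List (S ⊕ Γ)) (x y : S) :
      GStep m γ₀ (u ++ Sum.inl x :: Sum.inl y :: v) (u ++ Sum.inl (m x γ₀ y) :: v)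

/-- The defining relations on the free semigroup on S ⊕ Γ. -/
def GRel (m : S → Γ → S → S) (γ₀ : Γ) :
    FreeSemigroup (S ⊕ Γ) → FreeSemigroup (S ⊕ Γ) → Prop :=
  fun a b =>
    (∃ γ₁ γ₂ : Γ, a = of (Sum.inr γ₁) * of (Sum.inr γ₂) ∧ b = of (Sum.inr γ₁)) ∨
    (∃ (x y : S) (γ : Γ), a = of (Sum.inl x) * of (Sum.inr γ) * of (Sum.inl y) ∧
      b = of (Sum.inl (m x γ y))) ∨
    (∃ x y : S, a = of (Sum.inl x) * of (Sum.inl y) ∧ b = of (Sum.inl (m x γ₀ y)))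

/-- The congruence generated by the defining relations. -/
def GCon (m : S → Γ → S → S) (γ₀ : Γ) : Con (FreeSemigroup (S ⊕ Γ)) := conGen (GRel m γ₀)

/-- The universal semigroup Σ of the Γ-semigroup S. -/
abbrev USem (m : S → Γ → S → S) (γ₀ : Γ) := (GCon m γ₀).Quotient

/-- The canonical map μ : S → Σ. -/
def gmu (m : S → Γ → S → S) (γ₀ : Γ) (x : S) : USem m γ₀ :=
  ((of (Sum.inl x) : FreeSemigroup (S ⊕ Γ)) : (GCon m γ₀).Quotient)

/-- The canonical map Γ → Σ. -/
def giota (m : S → Γ → S → S) (γ₀ : Γ) (γ : Γ) : USem m γ₀ :=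
  ((of (Sum.inr γ) : FreeSemigroup (S ⊕ Γ)) : (GCon m γ₀).Quotient)

/-- Principal left ideal of an element of a semigroup. -/
def pLeft {T : Type} [Semigroup T] (a : T) : Set T := {w | ∃ t : T, w = t * a} ∪ {a}

/-- Principal right ideal of an element of a semigroup. -/
def pRight {T : Type} [Semigroup T] (a : T) : Set T := {w | ∃ t : T, w = a * t} ∪ {a}

/-- Principal left ideal in the Γ-semigroup: SΓx ∪ {x}. -/
def pLeftG (m : S → Γ → S → S) (x : S) : Set S := {y | ∃ (s : S) (γ : Γ), y = m s γ x} ∪ {x}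

/-- Principal right ideal in the Γ-semigroup: xΓS ∪ {x}. -/
def pRightG (m : S → Γ → S → S) (x : S) : Set S := {y | ∃ (γ : Γ) (s : S), y = m x γ s} ∪ {x}

/-- Green's H relation on the Γ-semigroup. -/
def HrelG (m : S → Γ → S → S) (a b : S) : Prop := pLeftG m a = pLeftG m b ∧ pRightG m a = pRightG m b

/-- S_δ is a simple semigroup: its only two-sided ideal is S itself. -/
def SimpleAt (m : S → Γ → S → S) (δ : Γ) : Prop :=
  ∀ J : Set S, J.Nonempty → (∀ t : S, ∀ j ∈ J, m t δ j ∈ J ∧ m j δ t ∈ J) → J = Set.univ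

/-- e is an idempotent of S_δ. -/
def IdemAt (m : S → Γ → S → S) (δ : Γ) (e : S) : Prop := m e δ e = e

/-- e is a primitive idempotent of S_δ. -/
def PrimAt (m : S → Γ → S → S) (δ : Γ) (e : S) : Prop :=
  IdemAt m δ e ∧ ∀ f, IdemAt m δ f → m e δ f = f → m f δ e = f → f = e

/-- S_δ is completely simple. -/
def CSimpleAt (m : S → Γ → S → S) (δ : Γ) : Prop := SimpleAt m δ ∧ ∃ e, PrimAt m δ e

/-- S_δ has no zero element. -/
def NoZeroAt (m : S → Γ → S → S) (δ : Γ) : Prop := ¬ ∃ z : S, ∀ t : S, m z δ t = z ∧ m t δ z = z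

/-- L is a left ideal of S_δ. -/
def LIdealAt (m : S → Γ → S → S) (δ : Γ) (L : Set S) : Prop :=
  L.Nonempty ∧ ∀ t : S, ∀ l ∈ L, m t δ l ∈ L

/-- L is a minimal left ideal of S_δ. -/
def MinLIdealAt (m : S → Γ → S → S) (δ : Γ) (L : Set S) : Prop :=
  LIdealAt m δ L ∧ ∀ L' ⊆ L, LIdealAt m δ L' → L' = L

/-- S_δ is a group. -/
def GroupAt (m : S → Γ → S → S) (δ : Γ) : Prop :=
  ∃ e : S, (∀ a, m e δ a = a ∧ m a δ e = a) ∧ ∀ a, ∃ b, m a δ b = e ∧ m b δ a = e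

/-- G is a subgroup (a sub-semigroup that is a group) of the semigroup T. -/
def IsSubgroupOf {T : Type} [Semigroup T] (G : Set T) : Prop :=
  (∀ a ∈ G, ∀ b ∈ G, a * b ∈ G) ∧
  ∃ e ∈ G, (∀ g ∈ G, e * g = g ∧ g * e = g) ∧ ∀ g ∈ G, ∃ h ∈ G, g * h = e ∧ h * g = e

/-- The set Σ' = Σ \ Γ. -/
def USem' (m : S → Γ → S → S) (γ₀ : Γ) : Set (USem m γ₀) := {w | ¬ ∃ γ : Γ, w = giota m γ₀ γ}

end GammaSemigroup

theorem stmt (S S' Γ : Type) [Nonempty S] [Nonempty S'] [Nonempty Γ]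
    (m : S → Γ → S → S) (m' : S' → Γ → S' → S')
    (assoc : ∀ (a b c : S) (α β : Γ), m (m a α b) β c = m a α (m b β c))
    (assoc' : ∀ (a b c : S') (α β : Γ), m' (m' a α b) β c = m' a α (m' b β c))
    (γ₀ : Γ) (φ : S → S') (hφ : ∀ (x y : S) (γ : Γ), φ (m x γ y) = m' (φ x) γ (φ y)) :
    ∃! Φ : USem m γ₀ →ₙ* USem m' γ₀,
      (∀ γ : Γ, Φ (giota m γ₀ γ) = giota m' γ₀ γ) ∧
      (∀ x : S, Φ (gmu m γ₀ x) = gmu m' γ₀ (φ x)) := by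
  classical
  let f : FreeSemigroup (S ⊕ Γ) →ₙ* USem m' γ₀ :=
    FreeSemigroup.lift (fun a : S ⊕ Γ =>
      ((of (Sum.map φ id a) : FreeSemigroup (S' ⊕ Γ)) : (GCon m' γ₀).Quotient))
  have hker : GCon m γ₀ ≤ Con.ker f := by
    apply Con.conGen_le.mpr
    rintro a b (⟨γ₁, γ₂, rfl, rfl⟩ | ⟨x, y, γ, rfl, rfl⟩ | ⟨x, y, rfl, rfl⟩) <;>
    · show f _ = f _
      simp only [f, map_mul, FreeSemigroup.lift_of, Sum.map_inl, Sum.map_inr, id_eq, ← Con.coe_mul]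
      apply ((GCon m' γ₀).eq).mpr
      apply ConGen.Rel.of
      first
        | exact Or.inl ⟨γ₁, γ₂, rfl, rfl⟩
        | exact Or.inr (Or.inl ⟨φ x, φ y, γ, rfl, by rw [hφ]⟩)
        | exact Or.inr (Or.inr ⟨φ x, φ y, rfl, by rw [hφ]⟩)
  let Φ : USem m γ₀ →ₙ* USem m' γ₀ :=
    { toFun := fun q => Con.liftOn q f (fun a b h => hker h)
      map_mul' := fun x y => Con.induction_on₂ x y fun a b => by
        show Con.liftOn ((a * b : FreeSemigroup (S ⊕ Γ)) : (GCon m γ₀).Quotient) f _ = _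
        show f (a * b) = f a * f b
        rw [map_mul] }
  refine ⟨Φ, ⟨fun γ => ?_, fun x => ?_⟩, ?_⟩
  · show f (of (Sum.inr γ)) = _
    simp [f, giota]
  · show f (of (Sum.inl x)) = _
    simp [f, gmu]
  · rintro Φ' ⟨hΓ, hS⟩
    ext w
    induction w using Con.induction_on with
    | H w =>
      induction w using FreeSemigroup.recOnMul with
      | ih1 a =>
        cases a with
        | inl x =>
          show Φ' (gmu m γ₀ x) = Φ (gmu m γ₀ x)
          rw [hS x]
          show _ = f (of (Sum.inl x))
          simp [f, gmu]
        | inr γ =>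
          show Φ' (giota m γ₀ γ) = Φ (giota m γ₀ γ)
          rw [hΓ γ]
          show _ = f (of (Sum.inr γ))
          simp [f, giota]
      | ih2 a b ha hb =>
        rw [Con.coe_mul, map_mul, map_mul, ha, hb]
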